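/- In the constrained Lasso setup, suppose ‖γ̂ − Γ̂β*‖_∞ ≤ λ/4, suppose Γ̂ satisfies the Lower-RE condition with curvature α > 0 and tolerance τ > 0, suppose λ ≥ 4 b₁ τ, and suppose additionally 16 d₀ τ ≤ (2/15) α (i.e., α ≥ 120 d₀ τ). Then the minimizer satisfies ‖β̂ − β*‖₂ ≤ 3 λ √d₀ / α and ‖β̂ − β*‖₁ ≤ 4 √d₀ ‖β̂ − β*‖₂ ≤ 12 λ d₀ / α. -/
import Mathlib


open MeasureTheory Matrix Finset

/-- Euclidean (ℓ₂) norm of a vector. -/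
noncomputable def e2 {ι : Type*} [Fintype ι] (v : ι → ℝ) : ℝ :=
  Real.sqrt (∑ i, v i ^ 2)

/-- ℓ₁ norm of a vector. -/
noncomputable def l1 {ι : Type*} [Fintype ι] (v : ι → ℝ) : ℝ := ∑ i, |v i|

/-- The constrained Lasso objective `(1/2)βᵀΓ̂β − ⟨γ̂, β⟩ + λ‖β‖₁`. -/
noncomputable def lassoObj {p : ℕ} (Γ : Matrix (Fin p) (Fin p) ℝ)
    (γ : Fin p → ℝ) (lam : ℝ) (β : Fin p → ℝ) : ℝ :=
  (1 / 2 : ℝ) * (β ⬝ᵥ Γ.mulVec β) - γ ⬝ᵥ β + lam * l1 β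

/-- The Lower-RE condition with curvature `α` and tolerance `τ`. -/
def LowerRE {p : ℕ} (Γ : Matrix (Fin p) (Fin p) ℝ) (α τ : ℝ) : Prop :=
  ∀ θ : Fin p → ℝ, α * e2 θ ^ 2 - τ * l1 θ ^ 2 ≤ θ ⬝ᵥ Γ.mulVec θ

set_option maxHeartbeats 1600000 in
/-- Lemma: ℓ₂ and ℓ₁ error bounds for the constrained Lasso. -/
theorem lasso_error_bounds
    (p : ℕ) (Γ : Matrix (Fin p) (Fin p) ℝ) (hΓ : Γ.IsSymm)
    (γ : Fin p → ℝ) (lam b₁ : ℝ) (hlam : 0 < lam) (hb₁ : 0 < b₁)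
    (βstar : Fin p → ℝ) (hβstar : l1 βstar ≤ b₁)
    (S : Finset (Fin p)) (hS : ∀ i, i ∈ S ↔ βstar i ≠ 0)
    (d₀ : ℕ) (hd₀ : S.card ≤ d₀)
    (βhat : Fin p → ℝ) (hβhat : l1 βhat ≤ b₁)
    (hmin : ∀ β : Fin p → ℝ, l1 β ≤ b₁ → lassoObj Γ γ lam βhat ≤ lassoObj Γ γ lam β)
    (horacle : ∀ i, |γ i - Γ.mulVec βstar i| ≤ lam / 4)
    (α τ : ℝ) (hα : 0 < α) (hτ : 0 < τ)
    (hRE : LowerRE Γ α τ)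
    (hlamtau : 4 * b₁ * τ ≤ lam)
    (hd₀τ : 16 * d₀ * τ ≤ (2 / 15) * α) :
    e2 (βhat - βstar) ≤ 3 * lam * Real.sqrt d₀ / α ∧
    l1 (βhat - βstar) ≤ 4 * Real.sqrt d₀ * e2 (βhat - βstar) ∧
    4 * Real.sqrt d₀ * e2 (βhat - βstar) ≤ 12 * lam * d₀ / α := by
  set Δ : Fin p → ℝ := βhat - βstar with hΔ
  have hΔi : ∀ i, Δ i = βhat i - βstar i := fun i => rfl
  set E : ℝ := e2 Δ with hE
  set L : ℝ := l1 Δ with hL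
  set A : ℝ := ∑ i ∈ S, |Δ i| with hA
  set B : ℝ := ∑ i ∈ Sᶜ, |Δ i| with hB
  clear_value Δ E L A B
  have hEnn : 0 ≤ E := by rw [hE, e2]; exact Real.sqrt_nonneg _
  have hAnn : 0 ≤ A := by rw [hA]; exact Finset.sum_nonneg fun i _ => abs_nonneg _
  have hBnn : 0 ≤ B := by rw [hB]; exact Finset.sum_nonneg fun i _ => abs_nonneg _
  have hLAB : L = A + B := by
    rw [hL, l1, hA, hB, Finset.sum_add_sum_compl]
  have hE2 : E ^ 2 = ∑ i, Δ i ^ 2 := by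
    rw [hE, e2, Real.sq_sqrt (Finset.sum_nonneg fun i _ => sq_nonneg _)]
  -- symmetry
  have hsym : ∀ x y : Fin p → ℝ, x ⬝ᵥ Γ.mulVec y = y ⬝ᵥ Γ.mulVec x := by
    intro x y
    rw [Matrix.dotProduct_mulVec]
    nth_rewrite 1 [← hΓ]
    rw [Matrix.vecMul_transpose, dotProduct_comm]
  -- quadratic expansion
  have quad : Δ ⬝ᵥ Γ.mulVec Δ
      = βhat ⬝ᵥ Γ.mulVec βhat - 2 * (βstar ⬝ᵥ Γ.mulVec βhat) + βstar ⬝ᵥ Γ.mulVec βstar := by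
    have h1 : Γ.mulVec Δ = Γ.mulVec βhat - Γ.mulVec βstar := by
      rw [hΔ, Matrix.mulVec_sub]
    rw [h1, hΔ, dotProduct_sub, sub_dotProduct, sub_dotProduct,
      hsym βhat βstar]
    ring
  -- basic inequality
  have hbasic := hmin βstar hβstar
  rw [lassoObj, lassoObj] at hbasic
  -- oracle bound: γ ⬝ᵥ Δ - (Γ.mulVec βstar) ⬝ᵥ Δ ≤ lam/4 * L
  have hgd : γ ⬝ᵥ Δ = γ ⬝ᵥ βhat - γ ⬝ᵥ βstar := by
    rw [hΔ, dotProduct_sub]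
  have hsd : (Γ.mulVec βstar) ⬝ᵥ Δ
      = βstar ⬝ᵥ Γ.mulVec βhat - βstar ⬝ᵥ Γ.mulVec βstar := by
    rw [hΔ, dotProduct_sub, dotProduct_comm (Γ.mulVec βstar) βhat,
      hsym βhat βstar, dotProduct_comm (Γ.mulVec βstar) βstar]
  have horc : γ ⬝ᵥ Δ - (Γ.mulVec βstar) ⬝ᵥ Δ ≤ lam / 4 * L := by
    have h1 : γ ⬝ᵥ Δ - (Γ.mulVec βstar) ⬝ᵥ Δ = ∑ i, (γ i - Γ.mulVec βstar i) * Δ i := by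
      rw [dotProduct, dotProduct, ← Finset.sum_sub_distrib]
      exact Finset.sum_congr rfl fun i _ => by ring
    rw [h1, hL, l1, Finset.mul_sum]
    refine Finset.sum_le_sum fun i _ => ?_
    calc (γ i - Γ.mulVec βstar i) * Δ i ≤ |(γ i - Γ.mulVec βstar i) * Δ i| := le_abs_self _
      _ = |γ i - Γ.mulVec βstar i| * |Δ i| := abs_mul _ _
      _ ≤ lam / 4 * |Δ i| := mul_le_mul_of_nonneg_right (horacle i) (abs_nonneg _)
  -- l1 decomposition bound
  have hl1dec : l1 βstar - l1 βhat ≤ A - B := by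
    have hstar : l1 βstar = ∑ i ∈ S, |βstar i| := by
      rw [l1, ← Finset.sum_add_sum_compl S]
      have : ∑ i ∈ Sᶜ, |βstar i| = 0 := by
        refine Finset.sum_eq_zero fun i hi => ?_
        rw [Finset.mem_compl, hS, not_not] at hi
        simp [hi]
      rw [this, add_zero]
    have hhat : l1 βhat = ∑ i ∈ S, |βhat i| + ∑ i ∈ Sᶜ, |βhat i| := by
      rw [l1, Finset.sum_add_sum_compl]
    have h1 : ∑ i ∈ S, |βstar i| - ∑ i ∈ S, |βhat i| ≤ A := by
      rw [← Finset.sum_sub_distrib, hA]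
      refine Finset.sum_le_sum fun i _ => ?_
      rw [hΔi, abs_sub_comm]
      exact abs_sub_abs_le_abs_sub _ _
    have h2 : B = ∑ i ∈ Sᶜ, |βhat i| := by
      rw [hB]
      refine Finset.sum_congr rfl fun i hi => ?_
      rw [Finset.mem_compl, hS, not_not] at hi
      rw [hΔi, hi, sub_zero]
    rw [hstar, hhat, h2]
    linarith
  -- L ≤ 2 b₁
  have hL2b : L ≤ 2 * b₁ := by
    have : L ≤ l1 βhat + l1 βstar := by
      rw [hL, l1, l1, l1, ← Finset.sum_add_distrib]
      exact Finset.sum_le_sum fun i _ => by rw [hΔi]; exact abs_sub _ _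
    linarith
  have hLnn : 0 ≤ L := by rw [hLAB]; linarith
  -- Cauchy-Schwarz: A ≤ √d₀ * E
  have hcs : A ≤ Real.sqrt d₀ * E := by
    have h1 := Finset.sum_mul_sq_le_sq_mul_sq S (fun _ => (1 : ℝ)) (fun i => |Δ i|)
    simp only [one_mul, one_pow, Finset.sum_const, nsmul_eq_mul, mul_one, sq_abs] at h1
    have h2 : ∑ i ∈ S, Δ i ^ 2 ≤ ∑ i, Δ i ^ 2 :=
      Finset.sum_le_sum_of_subset_of_nonneg (Finset.subset_univ S)
        (fun i _ _ => sq_nonneg _)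
    have h3 : A ^ 2 ≤ (d₀ : ℝ) * E ^ 2 := by
      rw [hE2, hA]
      calc (∑ i ∈ S, |Δ i|) ^ 2 ≤ (S.card : ℝ) * ∑ i ∈ S, Δ i ^ 2 := h1
        _ ≤ (d₀ : ℝ) * ∑ i, Δ i ^ 2 :=
            mul_le_mul (by exact_mod_cast hd₀) h2
              (Finset.sum_nonneg fun i _ => sq_nonneg _) (Nat.cast_nonneg _)
    calc A = Real.sqrt (A ^ 2) := (Real.sqrt_sq hAnn).symm
      _ ≤ Real.sqrt ((d₀ : ℝ) * E ^ 2) := Real.sqrt_le_sqrt h3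
      _ = Real.sqrt d₀ * E := by
          rw [Real.sqrt_mul (Nat.cast_nonneg _), Real.sqrt_sq hEnn]
  -- key inequality
  have hld : lam * (l1 βstar - l1 βhat) ≤ lam * (A - B) :=
    mul_le_mul_of_nonneg_left hl1dec hlam.le
  have hquadub : Δ ⬝ᵥ Γ.mulVec Δ ≤ 2 * (lam / 4 * L + lam * (A - B)) := by
    have hb' : 1 / 2 * (βhat ⬝ᵥ Γ.mulVec βhat) - 1 / 2 * (βstar ⬝ᵥ Γ.mulVec βstar)
        ≤ γ ⬝ᵥ βhat - γ ⬝ᵥ βstar + (lam * l1 βstar - lam * l1 βhat) := by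
      nlinarith [hbasic]
    nlinarith [quad, hgd, hsd, horc, hld, hb']
  have hREΔ := hRE Δ
  have htau : τ * L ^ 2 ≤ lam / 2 * L := by
    nlinarith [mul_nonneg (sub_nonneg.mpr hL2b) (mul_nonneg hτ.le hLnn),
      mul_nonneg (sub_nonneg.mpr hlamtau) hLnn]
  have hABL : lam * L = lam * A + lam * B := by rw [hLAB]; ring
  have key : α * E ^ 2 ≤ 3 * lam * A - lam * B := by
    rw [← hE, ← hL] at hREΔ
    linarith [hREΔ, hquadub, htau, hABL]
  have hE2nn : 0 ≤ α * E ^ 2 := by positivity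
  have hcone : B ≤ 3 * A := by nlinarith [key, hE2nn, hlam]
  -- first bound
  have hbound1 : E ≤ 3 * lam * Real.sqrt d₀ / α := by
    have hkey2 : α * E ^ 2 ≤ 3 * lam * (Real.sqrt d₀ * E) := by
      nlinarith [key, hcs, hlam, hBnn]
    rcases eq_or_lt_of_le hEnn with h0 | h0
    · rw [← h0]
      positivity
    · rw [le_div_iff₀ hα]
      nlinarith [hkey2, h0]
  refine ⟨hbound1, ?_, ?_⟩
  · rw [hLAB]
    nlinarith [hcone, hcs]
  · have h4 : (0:ℝ) ≤ 4 * Real.sqrt d₀ := by positivity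
    have := mul_le_mul_of_nonneg_left hbound1 h4
    have hsq : Real.sqrt d₀ * Real.sqrt d₀ = (d₀ : ℝ) :=
      Real.mul_self_sqrt (Nat.cast_nonneg _)
    have heq : 4 * Real.sqrt d₀ * (3 * lam * Real.sqrt d₀ / α) = 12 * lam * d₀ / α := by
      linear_combination (12 * lam / α) * hsq
    linarith [heq ▸ this]
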